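/- Let E be a nonzero object of 𝒜 admitting a Harder–Narasimhan filtration 0 ≠ E₀ ⊆ E₁ ⊆ ⋯ ⊆ Eₙ = E with respect to φ, and assume that every nonzero object of 𝒜 admits a Harder–Narasimhan filtration with respect to φ. Then for every nonzero subobject F of E with φ(F) ≥ φ(E₀), one has φ(F) = φ(E₀), F is φ-semistable, and the monomorphism F → E factors through the subobject E₀ (i.e. F is a subobject of E₀). -/

import Mathlib

open CategoryTheory CategoryTheory.Limits

/-- `φ` satisfies the seesaw property: for every short exact sequence
`0 → A → B → C → 0` with `A`, `B`, `C` all nonzero, either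
`φ A < φ B < φ C`, or `φ A > φ B > φ C`, or `φ A = φ B = φ C`. -/
def SeesawProperty {C : Type*} [Category C] [Abelian C] {Φ : Type*} [LinearOrder Φ]
    (φ : C → Φ) : Prop :=
  ∀ S : ShortComplex C, S.ShortExact →
    ¬ IsZero S.X₁ → ¬ IsZero S.X₂ → ¬ IsZero S.X₃ →
      (φ S.X₁ < φ S.X₂ ∧ φ S.X₂ < φ S.X₃) ∨
      (φ S.X₃ < φ S.X₂ ∧ φ S.X₂ < φ S.X₁) ∨
      (φ S.X₁ = φ S.X₂ ∧ φ S.X₂ = φ S.X₃)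

/-- A nonzero object `E` is `φ`-semistable if `φ F ≤ φ E` for every nonzero
subobject `F` of `E`. -/
def IsSemistable {C : Type*} [Category C] [Abelian C] {Φ : Type*} [LinearOrder Φ]
    (φ : C → Φ) (E : C) : Prop :=
  ¬ IsZero E ∧ ∀ (F : C) (f : F ⟶ E), Mono f → ¬ IsZero F → φ F ≤ φ E

/-- The successive quotient `E_{i+1}/E_i` of a monotone chain of subobjects. -/
noncomputable def filtrationQuotient {C : Type*} [Category C] [Abelian C] {E : C} {n : ℕ}
    (F : Fin (n + 1) → Subobject E) (hF : Monotone F) (i : Fin n) : C :=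
  cokernel (Subobject.ofLE (F i.castSucc) (F i.succ) (hF (Fin.castSucc_lt_succ (i := i)).le))

/-- A Harder–Narasimhan filtration `0 ≠ E₀ ⊆ E₁ ⊆ ⋯ ⊆ Eₙ = E` of `E` with respect
to `φ`: `E₀` and each quotient `Eᵢ₊₁/Eᵢ` are nonzero and `φ`-semistable, and
`φ E₀ > φ (E₁/E₀) > ⋯ > φ (Eₙ/Eₙ₋₁)`. -/
structure HNFiltration {C : Type*} [Category C] [Abelian C] {Φ : Type*} [LinearOrder Φ]
    (φ : C → Φ) (E : C) where
  n : ℕ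
  F : Fin (n + 1) → Subobject E
  mono : Monotone F
  top : F (Fin.last n) = ⊤
  semistable_zero : IsSemistable φ ((F 0) : C)
  semistable_quot : ∀ i : Fin n, IsSemistable φ (filtrationQuotient F mono i)
  lt_zero : ∀ i : Fin n, φ (filtrationQuotient F mono i) < φ ((F 0) : C)
  strictAnti : StrictAnti fun i : Fin n => φ (filtrationQuotient F mono i)

section AuxLemmas

variable {C : Type*} [Category C] [Abelian C] {Φ : Type*} [LinearOrder Φ]
variable (φ : C → Φ)

/-- The seesaw property implies that `φ` is invariant under isomorphisms of nonzero objects. -/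
lemma phi_iso' (hφ : SeesawProperty φ) {A B : C} (e : A ≅ B) (hA : ¬ IsZero A) :
    φ A = φ B := by
  have hB : ¬ IsZero B := fun h => hA (h.of_iso e)
  have hBB : ¬ IsZero (B ⊞ B) := by
    intro h
    apply hB
    rw [IsZero.iff_id_eq_zero]
    rw [← biprod.inl_fst (X := B) (Y := B), h.eq_zero_of_tgt biprod.inl, zero_comp]
  let S1 : ShortComplex C := ShortComplex.mk (biprod.inl : B ⟶ B ⊞ B) (biprod.snd) (by simp)
  let sp1 : S1.Splitting :=
    { r := biprod.fst
      s := biprod.inr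
      f_r := by simp [S1]
      s_g := by simp [S1]
      id := by simpa [S1] using biprod.total }
  have h1 := hφ S1 sp1.shortExact hB hBB hB
  have hmid : φ B = φ (B ⊞ B) := by
    rcases h1 with ⟨h, h'⟩ | ⟨h, h'⟩ | ⟨h, h'⟩
    · exact absurd (h.trans h') (lt_irrefl _)
    · exact absurd (h.trans h') (lt_irrefl _)
    · exact h
  let S2 : ShortComplex C := ShortComplex.mk (e.hom ≫ biprod.inl : A ⟶ B ⊞ B) (biprod.snd)
    (by simp)
  let sp2 : S2.Splitting :=
    { r := biprod.fst ≫ e.inv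
      s := biprod.inr
      f_r := by simp [S2]
      s_g := by simp [S2]
      id := by simpa [S2] using biprod.total }
  have h2 := hφ S2 sp2.shortExact hA hBB hB
  rcases h2 with ⟨h, h'⟩ | ⟨h, h'⟩ | ⟨h, h'⟩
  · exact absurd (hmid ▸ h') (lt_irrefl _)
  · exact absurd (hmid ▸ h) (lt_irrefl _)
  · exact h.trans h'

/-- The seesaw trichotomy for the short exact sequence determined by a monomorphism. -/
lemma seesaw_mono' (hφ : SeesawProperty φ) {X Y : C} (m : X ⟶ Y) [Mono m]
    (hX : ¬ IsZero X) (hY : ¬ IsZero Y) (hQ : ¬ IsZero (cokernel m)) :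
    (φ X < φ Y ∧ φ Y < φ (cokernel m)) ∨
    (φ (cokernel m) < φ Y ∧ φ Y < φ X) ∨
    (φ X = φ Y ∧ φ Y = φ (cokernel m)) := by
  let S : ShortComplex C := ShortComplex.mk m (cokernel.π m) (cokernel.condition m)
  have hex : S.Exact := S.exact_of_g_is_cokernel (cokernelIsCokernel m)
  have hSE : S.ShortExact := { exact := hex }
  exact hφ S hSE hX hY hQ

/-- A morphism killed by the cokernel projection of a monomorphism lifts through it. -/
lemma mono_lift' {X Y W : C} (m : X ⟶ Y) [Mono m]
    (g : W ⟶ Y) (hz : g ≫ cokernel.π m = 0) : ∃ h : W ⟶ X, h ≫ m = g := by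
  let S : ShortComplex C := ShortComplex.mk m (cokernel.π m) (cokernel.condition m)
  have hex : S.Exact := S.exact_of_g_is_cokernel (cokernelIsCokernel m)
  exact hex.lift' g hz

/-- A nonzero quotient of a semistable object has larger-or-equal `φ`. -/
lemma quot_le' (hφ : SeesawProperty φ) {X Q : C} (hss : IsSemistable φ X)
    (p : X ⟶ Q) [Epi p] (hQ : ¬ IsZero Q) : φ X ≤ φ Q := by
  by_cases hK : IsZero (kernel p)
  · haveI : Mono p := Preadditive.mono_of_isZero_kernel p hK
    haveI : IsIso p := isIso_of_mono_of_epi p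
    exact le_of_eq (phi_iso' φ hφ (asIso p) hss.1)
  · let S : ShortComplex C := ShortComplex.mk (kernel.ι p) p (kernel.condition p)
    have hex : S.Exact := S.exact_of_f_is_kernel (kernelIsKernel p)
    have hSE : S.ShortExact := { exact := hex }
    have hkle : φ (kernel p) ≤ φ X := hss.2 _ (kernel.ι p) inferInstance hK
    rcases hφ S hSE hK hss.1 hQ with ⟨h, h'⟩ | ⟨h, h'⟩ | ⟨h, h'⟩
    · exact h'.le
    · exact absurd h' (not_lt.mpr hkle)
    · exact h'.le

/-- There are no nonzero morphisms from a semistable object to a semistable object of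
strictly smaller `φ`. -/
lemma hom_zero' (hφ : SeesawProperty φ) {A B : C} (hA : IsSemistable φ A)
    (hB : IsSemistable φ B) (hlt : φ B < φ A) (u : A ⟶ B) : u = 0 := by
  by_contra hu
  have hI : ¬ IsZero (Abelian.image u) := by
    intro h
    apply hu
    rw [← Abelian.image.fac u, h.eq_zero_of_tgt (Abelian.factorThruImage u), zero_comp]
  have le1 : φ A ≤ φ (Abelian.image u) := quot_le' φ hφ hA (Abelian.factorThruImage u) hI
  have le2 : φ (Abelian.image u) ≤ φ B := hB.2 _ (Abelian.image.ι u) inferInstance hI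
  exact absurd ((hlt.trans_le le1).trans_le le2) (lt_irrefl _)

end AuxLemmas


/-- If every nonzero object of `𝒜` admits a HN filtration with respect to `φ`, `E` is a
nonzero object with HN filtration `0 ≠ E₀ ⊆ ⋯ ⊆ Eₙ = E`, and `F` is a nonzero subobject
of `E` with `φ F ≥ φ E₀`, then `φ F = φ E₀`, `F` is `φ`-semistable, and the
monomorphism `F ⟶ E` factors through the subobject `E₀`. -/
theorem maximal_destabilising_subobject {C : Type*} [Category C] [Abelian C]
    {Φ : Type*} [LinearOrder Φ] (φ : C → Φ) (hφ : SeesawProperty φ)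
    (hHN : ∀ X : C, ¬ IsZero X → Nonempty (HNFiltration φ X))
    (E : C) (hE : ¬ IsZero E) (fil : HNFiltration φ E)
    (F : C) (f : F ⟶ E) (hf : Mono f) (hF : ¬ IsZero F)
    (hge : φ ((fil.F 0) : C) ≤ φ F) :
    φ F = φ ((fil.F 0) : C) ∧ IsSemistable φ F ∧ (fil.F 0).Factors f := by
  haveI := hf
  obtain ⟨fil'⟩ := hHN F hF
  have hF₀nz : ¬ IsZero ((fil'.F 0 : C)) := fil'.semistable_zero.1
  have ssF₀ := fil'.semistable_zero
  have key : ∀ j : Fin (fil'.n + 1),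
      ¬ IsZero ((fil'.F j : C)) ∧ (j = 0 ∨ φ ((fil'.F j : C)) < φ ((fil'.F 0 : C))) := by
    intro j
    induction j using Fin.induction with
    | zero => exact ⟨hF₀nz, Or.inl rfl⟩
    | succ i ih =>
      obtain ⟨hnz, hlt⟩ := ih
      set m := Subobject.ofLE (fil'.F i.castSucc) (fil'.F i.succ)
        (fil'.mono (Fin.castSucc_lt_succ (i := i)).le) with hm
      have hqeq : filtrationQuotient fil'.F fil'.mono i = cokernel m := rfl
      have hnzsucc : ¬ IsZero ((fil'.F i.succ : C)) := fun h => hnz (IsZero.of_mono m h)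
      have hqnz : ¬ IsZero (cokernel m) := hqeq ▸ (fil'.semistable_quot i).1
      have hqlt : φ (cokernel m) < φ ((fil'.F 0 : C)) := hqeq ▸ fil'.lt_zero i
      rcases seesaw_mono' φ hφ m hnz hnzsucc hqnz with ⟨h, h'⟩ | ⟨h, h'⟩ | ⟨h, h'⟩
      · exact ⟨hnzsucc, Or.inr (h'.trans hqlt)⟩
      · refine ⟨hnzsucc, Or.inr ?_⟩
        rcases hlt with h0 | h0
        · rw [h0] at h'; exact h'
        · exact h'.trans h0
      · exact ⟨hnzsucc, Or.inr (h' ▸ hqlt)⟩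
  have hlastnz := (key (Fin.last fil'.n)).1
  have philast : φ ((fil'.F (Fin.last fil'.n) : C)) = φ F := by
    haveI : IsIso ((fil'.F (Fin.last fil'.n)).arrow) :=
      (Subobject.isIso_arrow_iff_eq_top _).mpr fil'.top
    exact phi_iso' φ hφ (asIso (fil'.F (Fin.last fil'.n)).arrow) hlastnz
  have hF0le : φ F ≤ φ ((fil'.F 0 : C)) := by
    rcases (key (Fin.last fil'.n)).2 with h | h
    · rw [← philast, h]
    · rw [← philast]; exact h.le
  have hE0F₀ : φ ((fil.F 0 : C)) ≤ φ ((fil'.F 0 : C)) := hge.trans hF0le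
  set g : ((fil'.F 0 : C)) ⟶ E := (fil'.F 0).arrow ≫ f with hg
  haveI : Mono g := mono_comp _ _
  have fact : ∀ i : Fin (fil.n + 1), (fil.F i).Factors g := by
    intro i
    induction i using Fin.reverseInduction with
    | last => rw [fil.top]; exact Subobject.top_factors g
    | cast i ih =>
      set m := Subobject.ofLE (fil.F i.castSucc) (fil.F i.succ)
        (fil.mono (Fin.castSucc_lt_succ (i := i)).le) with hm
      have hqeq : filtrationQuotient fil.F fil.mono i = cokernel m := rfl
      set g' := (fil.F i.succ).factorThru g ih with hg'
      have hg'a : g' ≫ (fil.F i.succ).arrow = g := Subobject.factorThru_arrow _ _ _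
      have hzero : g' ≫ cokernel.π m = 0 := by
        have hq : IsSemistable φ (cokernel m) := hqeq ▸ fil.semistable_quot i
        have hlt : φ (cokernel m) < φ ((fil'.F 0 : C)) :=
          lt_of_lt_of_le (hqeq ▸ fil.lt_zero i) hE0F₀
        exact hom_zero' φ hφ ssF₀ hq hlt _
      obtain ⟨h, hh⟩ := mono_lift' m g' hzero
      have : h ≫ (fil.F i.castSucc).arrow = g := by
        rw [← Subobject.ofLE_arrow (fil.mono (Fin.castSucc_lt_succ (i := i)).le), ← Category.assoc,
          ← hm, hh, hg'a]
      exact this ▸ Subobject.factors_comp_arrow h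
  set h0 := (fil.F 0).factorThru g (fact 0) with hh0def
  have hh0 : h0 ≫ (fil.F 0).arrow = g := Subobject.factorThru_arrow _ _ _
  haveI : Mono h0 := mono_of_mono_fac hh0
  have hle : φ ((fil'.F 0 : C)) ≤ φ ((fil.F 0 : C)) :=
    fil.semistable_zero.2 _ h0 inferInstance hF₀nz
  have e1 : φ ((fil'.F 0 : C)) = φ ((fil.F 0 : C)) := le_antisymm hle hE0F₀
  have e2 : φ F = φ ((fil.F 0 : C)) := le_antisymm (hF0le.trans e1.le) hge
  have hn : fil'.n = 0 := by
    by_contra hn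
    rcases (key (Fin.last fil'.n)).2 with h | h
    · exact hn (by simpa [Fin.ext_iff] using h)
    · rw [philast, e2, ← e1] at h
      exact lt_irrefl _ h
  have htop : fil'.F 0 = ⊤ := by
    rw [← fil'.top]
    congr 1
    exact Fin.ext (by simp [hn])
  haveI : IsIso ((fil'.F 0).arrow) := (Subobject.isIso_arrow_iff_eq_top _).mpr htop
  set e : ((fil'.F 0 : C)) ≅ F := asIso (fil'.F 0).arrow with he
  refine ⟨e2, ⟨hF, ?_⟩, ?_⟩
  · intro G mg hmono hG
    haveI := hmono
    have := ssF₀.2 G (mg ≫ e.inv) (mono_comp _ _) hG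
    rw [e1] at this
    exact this.trans e2.symm.le
  · have hfac : (e.inv ≫ h0) ≫ (fil.F 0).arrow = f := by
      rw [Category.assoc, hh0, hg, ← Category.assoc]
      simp [he]
    exact hfac ▸ Subobject.factors_comp_arrow _
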